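/- In the multidimensional elephant random walk with stops, if 1/2 < r ≤ 1, then limsup_{n→∞} Z_n*/√(2n·log log n) ≤ 1/√(2r−1) almost surely. -/

import Mathlib

open MeasureTheory ProbabilityTheory Filter

noncomputable section

/-- The `d × d` cyclic permutation matrix `J_d` with ones on the superdiagonal and in
position `(d, 1)`. -/
def cyclicMatrix (d : ℕ) : Matrix (Fin d) (Fin d) ℝ :=
  Matrix.of fun i j => if (j : ℕ) = ((i : ℕ) + 1) % d then 1 else 0

/-- A matrix is measurable entrywise. -/
instance {m n : Type*} : MeasurableSpace (Matrix m n ℝ) :=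
  inferInstanceAs (MeasurableSpace (m → n → ℝ))

/-- The multidimensional elephant random walk with stops, with memory parameters
`p`, `q`, `r` satisfying `p + (2d-1)q + r = 1`. -/
structure MERWStops {Ω : Type*} [MeasurableSpace Ω] (P : Measure Ω)
    (d : ℕ) (p q r : ℝ) where
  X : ℕ → Ω → EuclideanSpace ℝ (Fin d)
  A : ℕ → Ω → Matrix (Fin d) (Fin d) ℝ
  β : ℕ → Ω → ℕ
  hd : 1 ≤ d
  hp : p ∈ Set.Icc (0 : ℝ) 1
  hq : q ∈ Set.Icc (0 : ℝ) 1
  hr : r ∈ Set.Icc (0 : ℝ) 1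
  hpqr : p + (2 * (d : ℝ) - 1) * q + r = 1
  measX : ∀ n, Measurable (X n)
  measA : ∀ n, Measurable (A n)
  measβ : ∀ n, Measurable (β n)
  /-- `X 1` is uniformly distributed on `{± e_1, …, ± e_d}`. -/
  hX1 : ∀ i : Fin d,
    P {ω | X 1 ω = EuclideanSpace.single i (1 : ℝ)} = ENNReal.ofReal (1 / (2 * (d : ℝ))) ∧
    P {ω | X 1 ω = -EuclideanSpace.single i (1 : ℝ)} = ENNReal.ofReal (1 / (2 * (d : ℝ)))
  /-- The recursion `X (n+1) = A (n+1) * X (β n)`. -/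
  hrec : ∀ n, 1 ≤ n → ∀ ω, ∀ i, X (n + 1) ω i = ∑ j, A (n + 1) ω i j * X (β n ω) ω j
  /-- `β n` is uniformly distributed on `{1, …, n}`. -/
  hβ : ∀ n, 1 ≤ n → ∀ k ∈ Finset.Icc 1 n, P {ω | β n ω = k} = ENNReal.ofReal (1 / (n : ℝ))
  hAI : ∀ n, 1 ≤ n → P {ω | A (n + 1) ω = 1} = ENNReal.ofReal p
  hAnegI : ∀ n, 1 ≤ n → P {ω | A (n + 1) ω = -1} = ENNReal.ofReal q
  hAJ : ∀ n, 1 ≤ n → ∀ i ∈ Finset.Icc 1 (d - 1),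
    P {ω | A (n + 1) ω = cyclicMatrix d ^ i} = ENNReal.ofReal q
  hAnegJ : ∀ n, 1 ≤ n → ∀ i ∈ Finset.Icc 1 (d - 1),
    P {ω | A (n + 1) ω = -(cyclicMatrix d ^ i)} = ENNReal.ofReal q
  hAzero : ∀ n, 1 ≤ n → P {ω | A (n + 1) ω = 0} = ENNReal.ofReal r
  /-- `A (n+1)`, `β n` and `σ(X_1, …, X_n)` are mutually independent. -/
  hindep : ∀ n, 1 ≤ n →
    iIndep
      ![MeasurableSpace.comap (A (n + 1)) inferInstance,
        MeasurableSpace.comap (β n) inferInstance,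
        ⨆ k ∈ Finset.Icc 1 n, MeasurableSpace.comap (X k) inferInstance] P

namespace MERWStops

variable {Ω : Type*} [MeasurableSpace Ω] {P : Measure Ω} {d : ℕ} {p q r : ℝ}

/-- The number of moves up to time `n` : `Z_n* = ∑_{k=1}^n ‖X_k‖²`. -/
def Zstar (W : MERWStops P d p q r) (n : ℕ) (ω : Ω) : ℝ :=
  ∑ k ∈ Finset.Icc 1 n, ‖W.X k ω‖ ^ 2

/-- The σ-field `G_n = σ(X_1, …, X_n)`. -/
def G (W : MERWStops P d p q r) (n : ℕ) : MeasurableSpace Ω :=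
  ⨆ k ∈ Finset.Icc 1 n, MeasurableSpace.comap (W.X k) inferInstance

/-- The normalizing sequence `a_1 = 1`, `a_n = ∏_{k=1}^{n-1} (1 + (1-r)/k)`. -/
def aseq (r : ℝ) (n : ℕ) : ℝ :=
  ∏ k ∈ Finset.Icc 1 (n - 1), (1 + (1 - r) / (k : ℝ))

end MERWStops
section Helpers

open Finset

instance {m n : Type*} [Countable m] [Countable n] : MeasurableSingletonClass (Matrix m n ℝ) :=
  inferInstanceAs (MeasurableSingletonClass (m → n → ℝ))

lemma sum_ite_coe {d : ℕ} (m : ℕ) (hm : m < d) (f : Fin d → ℝ) :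
    (∑ c : Fin d, (if (c : ℕ) = m then (1:ℝ) else 0) * f c) = f ⟨m, hm⟩ := by
  have : ∀ c : Fin d, ((c : ℕ) = m) = (c = (⟨m, hm⟩ : Fin d)) := by
    intro c; rw [Fin.ext_iff]
  simp only [this, ite_mul, one_mul, zero_mul]
  simp

lemma cyclic_pow_apply {d : ℕ} (hd : 0 < d) (i : ℕ) (a b : Fin d) :
    (cyclicMatrix d ^ i) a b = if (b : ℕ) = ((a : ℕ) + i) % d then 1 else 0 := by
  induction i generalizing b with
  | zero =>
    simp only [pow_zero, Matrix.one_apply, Nat.add_zero, Nat.mod_eq_of_lt a.isLt]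
    congr 1
    · simp [Fin.ext_iff, eq_comm]
  | succ n ih =>
    rw [pow_succ]
    rw [Matrix.mul_apply]
    have hm : ((a : ℕ) + n) % d < d := Nat.mod_lt _ hd
    calc (∑ c : Fin d, (cyclicMatrix d ^ n) a c * cyclicMatrix d c b)
        = ∑ c : Fin d, (if (c : ℕ) = ((a : ℕ) + n) % d then (1:ℝ) else 0) *
            cyclicMatrix d c b := by
          refine Finset.sum_congr rfl fun c _ => by rw [ih]
      _ = cyclicMatrix d ⟨((a : ℕ) + n) % d, hm⟩ b := sum_ite_coe _ hm _
      _ = if (b : ℕ) = ((a : ℕ) + (n+1)) % d then 1 else 0 := by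
          show (if (b : ℕ) = (((a : ℕ) + n) % d + 1) % d then (1:ℝ) else 0) = _
          rw [Nat.mod_add_mod, Nat.add_assoc]

lemma cyclic_mulVec_sum {d : ℕ} (hd : 0 < d) (i : ℕ) (x : Fin d → ℝ) (a : Fin d) :
    (∑ b : Fin d, (cyclicMatrix d ^ i) a b * x b)
      = x ⟨((a : ℕ) + i) % d, Nat.mod_lt _ hd⟩ := by
  calc (∑ b : Fin d, (cyclicMatrix d ^ i) a b * x b)
      = ∑ b : Fin d, (if (b : ℕ) = ((a : ℕ) + i) % d then (1:ℝ) else 0) * x b := by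
        refine Finset.sum_congr rfl fun b _ => by rw [cyclic_pow_apply hd]
    _ = _ := sum_ite_coe _ _ _

/-- A matrix preserves the sum of squares under `mulVec`. -/
def NormPres {d : ℕ} (M : Matrix (Fin d) (Fin d) ℝ) : Prop :=
  ∀ x : Fin d → ℝ, (∑ a : Fin d, (∑ b : Fin d, M a b * x b) ^ 2) = ∑ b : Fin d, x b ^ 2

lemma normPres_cyc {d : ℕ} (hd : 0 < d) (i : ℕ) : NormPres (cyclicMatrix d ^ i) := by
  intro x
  have hg : Function.Bijective
      (fun a : Fin d => (⟨((a : ℕ) + i) % d, Nat.mod_lt _ hd⟩ : Fin d)) := by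
    refine Finite.injective_iff_bijective.mp ?_
    intro a b hab
    have h1 : ((a : ℕ) + i) % d = ((b : ℕ) + i) % d := by
      simpa [Fin.ext_iff] using hab
    have h2 : (a:ℕ) % d = (b:ℕ) % d := Nat.ModEq.add_right_cancel' i h1
    exact Fin.ext (by simpa [Nat.mod_eq_of_lt a.isLt, Nat.mod_eq_of_lt b.isLt] using h2)
  calc (∑ a : Fin d, (∑ b : Fin d, (cyclicMatrix d ^ i) a b * x b) ^ 2)
      = ∑ a : Fin d, x (⟨((a : ℕ) + i) % d, Nat.mod_lt _ hd⟩ : Fin d) ^ 2 := by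
        refine Finset.sum_congr rfl fun a _ => by rw [cyclic_mulVec_sum hd]
    _ = ∑ b : Fin d, x b ^ 2 := Fintype.sum_bijective _ hg _ _ (fun a => rfl)

lemma normPres_one {d : ℕ} : NormPres (1 : Matrix (Fin d) (Fin d) ℝ) := by
  intro x
  refine Finset.sum_congr rfl fun a _ => ?_
  congr 1
  simp [Matrix.one_apply, ite_mul]

lemma normPres_neg {d : ℕ} {M : Matrix (Fin d) (Fin d) ℝ} (h : NormPres M) :
    NormPres (-M) := by
  intro x
  have : ∀ a : Fin d, (∑ b : Fin d, (-M) a b * x b) = -(∑ b : Fin d, M a b * x b) := by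
    intro a
    rw [← Finset.sum_neg_distrib]
    exact Finset.sum_congr rfl fun b _ => by simp [Matrix.neg_apply]
  calc (∑ a : Fin d, (∑ b : Fin d, (-M) a b * x b) ^ 2)
      = ∑ a : Fin d, (∑ b : Fin d, M a b * x b) ^ 2 := by
        refine Finset.sum_congr rfl fun a _ => by rw [this a, neg_sq]
    _ = _ := h x

section distinct
variable {d : ℕ} (hd : 0 < d)
include hd

lemma cyc_entry_self {i : ℕ} (hi : i < d) :
    (cyclicMatrix d ^ i) ⟨0, hd⟩ ⟨i, hi⟩ = 1 := by
  rw [cyclic_pow_apply hd]; simp [Nat.mod_eq_of_lt hi]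

lemma cyc_entry_ne {i j : ℕ} (hi : i < d) (hj : j < d) (hij : i ≠ j) :
    (cyclicMatrix d ^ j) ⟨0, hd⟩ ⟨i, hi⟩ = 0 := by
  rw [cyclic_pow_apply hd]
  simp [Nat.mod_eq_of_lt hj, hij]

lemma one_entry {i : ℕ} (hi : i < d) (hi1 : 1 ≤ i) :
    (1 : Matrix (Fin d) (Fin d) ℝ) ⟨0, hd⟩ ⟨i, hi⟩ = 0 := by
  rw [Matrix.one_apply]
  simp [Fin.ext_iff]
  omega

lemma cyc_ne_one {i : ℕ} (hi : i < d) (hi1 : 1 ≤ i) : cyclicMatrix d ^ i ≠ 1 := by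
  intro h
  have := congrFun (congrFun h ⟨0, hd⟩) ⟨i, hi⟩
  rw [cyc_entry_self hd hi, one_entry hd hi hi1] at this
  norm_num at this

lemma cyc_ne_negone {i : ℕ} (hi : i < d) (hi1 : 1 ≤ i) : cyclicMatrix d ^ i ≠ -1 := by
  intro h
  have := congrFun (congrFun h ⟨0, hd⟩) ⟨i, hi⟩
  rw [cyc_entry_self hd hi] at this
  rw [Matrix.neg_apply, one_entry hd hi hi1] at this
  norm_num at this

lemma cyc_ne_zero {i : ℕ} (hi : i < d) (hi1 : 1 ≤ i) : cyclicMatrix d ^ i ≠ 0 := by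
  intro h
  have := congrFun (congrFun h ⟨0, hd⟩) ⟨i, hi⟩
  rw [cyc_entry_self hd hi] at this
  norm_num [Matrix.zero_apply] at this

lemma cyc_ne_cyc {i j : ℕ} (hi : i < d) (hj : j < d) (hij : i ≠ j) :
    cyclicMatrix d ^ i ≠ cyclicMatrix d ^ j := by
  intro h
  have := congrFun (congrFun h ⟨0, hd⟩) ⟨i, hi⟩
  rw [cyc_entry_self hd hi, cyc_entry_ne hd hi hj hij] at this
  norm_num at this

lemma cyc_ne_negcyc {i j : ℕ} (hi : i < d) (hj : j < d) :
    cyclicMatrix d ^ i ≠ -(cyclicMatrix d ^ j) := by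
  intro h
  have := congrFun (congrFun h ⟨0, hd⟩) ⟨i, hi⟩
  rw [cyc_entry_self hd hi, Matrix.neg_apply, cyclic_pow_apply hd] at this
  split_ifs at this <;> norm_num at this

lemma matrix_one_ne_negone : (1 : Matrix (Fin d) (Fin d) ℝ) ≠ -1 := by
  intro h
  have := congrFun (congrFun h ⟨0, hd⟩) ⟨0, hd⟩
  rw [Matrix.one_apply_eq, Matrix.neg_apply, Matrix.one_apply_eq] at this
  norm_num at this

lemma matrix_one_ne_zero : (1 : Matrix (Fin d) (Fin d) ℝ) ≠ 0 := by
  intro h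
  have := congrFun (congrFun h ⟨0, hd⟩) ⟨0, hd⟩
  rw [Matrix.one_apply_eq, Matrix.zero_apply] at this
  norm_num at this

lemma matrix_negone_ne_zero : (-1 : Matrix (Fin d) (Fin d) ℝ) ≠ 0 := by
  intro h
  have := congrFun (congrFun h ⟨0, hd⟩) ⟨0, hd⟩
  rw [Matrix.neg_apply, Matrix.one_apply_eq, Matrix.zero_apply] at this
  norm_num at this

end distinct

lemma euclidean_norm_sq_eq {d : ℕ} (x : EuclideanSpace ℝ (Fin d)) :
    ‖x‖ ^ 2 = ∑ i : Fin d, x i ^ 2 := by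
  rw [EuclideanSpace.norm_eq, Real.sq_sqrt (by positivity)]
  exact Finset.sum_congr rfl fun i _ => by rw [Real.norm_eq_abs, sq_abs]

end Helpers
namespace MERWStops

open Finset MeasureTheory ProbabilityTheory
open scoped ENNReal

variable {Ω : Type*} [MeasurableSpace Ω] {P : Measure Ω} {d : ℕ} {p q r : ℝ}
variable [IsProbabilityMeasure P]

lemma measE (W : MERWStops P d p q r) (k : ℕ) :
    MeasurableSet {ω | ‖W.X k ω‖ = 1} :=
  (W.measX k).norm (measurableSet_singleton 1)

lemma measEvA (W : MERWStops P d p q r) (n : ℕ) (M : Matrix (Fin d) (Fin d) ℝ) :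
    MeasurableSet {ω | W.A n ω = M} :=
  W.measA n (measurableSet_singleton M)

lemma ae_norm_one (W : MERWStops P d p q r) : ∀ᵐ ω ∂P, ‖W.X 1 ω‖ = 1 := by
  have hd0 : 0 < d := W.hd
  set f : Fin d → Set Ω := fun i =>
    {ω | W.X 1 ω = EuclideanSpace.single i (1 : ℝ)} ∪
    {ω | W.X 1 ω = -EuclideanSpace.single i (1 : ℝ)} with hf
  have hmeas : ∀ i, MeasurableSet (f i) := fun i =>
    (W.measX 1 (measurableSet_singleton _)).union (W.measX 1 (measurableSet_singleton _))
  have hnegne : ∀ i j : Fin d,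
      EuclideanSpace.single i (1:ℝ) ≠ -EuclideanSpace.single j (1:ℝ) := by
    intro i j h
    have := congrArg (fun v => v i) h
    simp only [PiLp.neg_apply, EuclideanSpace.single_apply, if_pos rfl] at this
    split_ifs at this <;> norm_num at this
  have hdisj : Pairwise (Function.onFun Disjoint f) := by
    intro i j hij
    have h1 : EuclideanSpace.single i (1:ℝ) ≠ EuclideanSpace.single j (1:ℝ) := by
      intro h
      have := congrArg (fun v => v i) h
      simp [EuclideanSpace.single_apply, hij] at this
    have h2 : -EuclideanSpace.single i (1:ℝ) ≠ -EuclideanSpace.single j (1:ℝ) :=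
      fun h => h1 (neg_injective h)
    rw [Function.onFun, hf, Set.disjoint_union_left]
    constructor <;> rw [Set.disjoint_union_right] <;>
      constructor <;> refine Set.disjoint_left.mpr fun ω hω1 hω2 => ?_ <;>
      simp only [Set.mem_setOf_eq] at hω1 hω2
    · exact h1 (hω1.symm.trans hω2)
    · exact hnegne i j (hω1.symm.trans hω2)
    · exact hnegne j i (hω2.symm.trans hω1)
    · exact h2 (hω1.symm.trans hω2)
  have hPU : P (⋃ i, f i) = 1 := by
    rw [measure_iUnion hdisj hmeas]
    have hfi : ∀ i, P (f i) = ENNReal.ofReal (1 / (2 * (d:ℝ))) +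
        ENNReal.ofReal (1 / (2 * (d:ℝ))) := by
      intro i
      have hm2 : MeasurableSet {ω | W.X 1 ω = -EuclideanSpace.single i (1:ℝ)} :=
        W.measX 1 (measurableSet_singleton _)
      have hd2 : Disjoint {ω | W.X 1 ω = EuclideanSpace.single i (1:ℝ)}
          {ω | W.X 1 ω = -EuclideanSpace.single i (1:ℝ)} :=
        Set.disjoint_left.mpr fun ω hω1 hω2 => hnegne i i (hω1.symm.trans hω2)
      rw [hf]
      rw [measure_union hd2 hm2, (W.hX1 i).1, (W.hX1 i).2]
    rw [tsum_eq_sum (s := Finset.univ) (fun i hi => absurd (Finset.mem_univ i) hi)]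
    rw [Finset.sum_congr rfl fun i _ => hfi i, Finset.sum_const, Finset.card_univ,
      Fintype.card_fin, nsmul_eq_mul]
    rw [← ENNReal.ofReal_add (by positivity) (by positivity)]
    rw [show ((d:ℝ≥0∞)) = ENNReal.ofReal (d:ℝ) from (ENNReal.ofReal_natCast d).symm]
    rw [← ENNReal.ofReal_mul (by positivity)]
    rw [show (d:ℝ) * (1 / (2 * (d:ℝ)) + 1 / (2 * (d:ℝ))) = 1 by field_simp; ring]
    exact ENNReal.ofReal_one
  have hc : P ((⋃ i, f i)ᶜ) = 0 := by
    rw [measure_compl (MeasurableSet.iUnion hmeas) (measure_ne_top _ _), hPU]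
    simp
  have : ∀ᵐ ω ∂P, ω ∈ ⋃ i, f i := by
    filter_upwards [(measure_eq_zero_iff_ae_notMem (μ := P)).mp hc] with ω hω
    simpa using hω
  filter_upwards [this] with ω hω
  simp only [Set.mem_iUnion, hf, Set.mem_union, Set.mem_setOf_eq] at hω
  obtain ⟨i, hi | hi⟩ := hω <;> rw [hi]
  · rw [EuclideanSpace.norm_single]; norm_num
  · rw [norm_neg, EuclideanSpace.norm_single]; norm_num

lemma ae_beta_mem (W : MERWStops P d p q r) (n : ℕ) (hn : 1 ≤ n) :
    ∀ᵐ ω ∂P, W.β n ω ∈ Finset.Icc 1 n := by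
  set f : ℕ → Set Ω := fun k => {ω | W.β n ω = k} with hf
  have hmeas : ∀ k, MeasurableSet (f k) := fun k => W.measβ n (measurableSet_singleton k)
  have hPU : P (⋃ k ∈ Finset.Icc 1 n, f k) = 1 := by
    have hdisj : (↑(Finset.Icc 1 n) : Set ℕ).PairwiseDisjoint f := by
      intro k _ l _ hkl
      exact Set.disjoint_left.mpr fun ω hω1 hω2 => hkl (hω1.symm.trans hω2)
    rw [measure_biUnion_finset hdisj (fun k _ => hmeas k)]
    rw [Finset.sum_congr rfl fun k hk => W.hβ n hn k hk, Finset.sum_const, Nat.card_Icc,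
      nsmul_eq_mul]
    simp only [Nat.add_sub_cancel]
    rw [show ((n:ℝ≥0∞)) = ENNReal.ofReal (n:ℝ) from (ENNReal.ofReal_natCast n).symm,
      ← ENNReal.ofReal_mul (by positivity),
      show (n:ℝ) * (1 / (n:ℝ)) = 1 by
        rw [mul_one_div, div_self (by positivity : (0:ℝ) < (n:ℝ)).ne']]
    exact ENNReal.ofReal_one
  have hc : P ((⋃ k ∈ Finset.Icc 1 n, f k)ᶜ) = 0 := by
    rw [measure_compl (Finset.measurableSet_biUnion _ fun k _ => hmeas k)
      (measure_ne_top _ _), hPU]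
    simp
  have : ∀ᵐ ω ∂P, ω ∈ ⋃ k ∈ Finset.Icc 1 n, f k := by
    filter_upwards [(measure_eq_zero_iff_ae_notMem (μ := P)).mp hc] with ω hω
    simpa [and_assoc] using hω
  filter_upwards [this] with ω hω
  simp only [Set.mem_iUnion, Set.mem_setOf_eq] at hω
  obtain ⟨k, hk, hke⟩ := hω
  rw [hke]; exact hk

end MERWStops
namespace MERWStops

open Finset MeasureTheory ProbabilityTheory
open scoped ENNReal

variable {Ω : Type*} [MeasurableSpace Ω] {P : Measure Ω} {d : ℕ} {p q r : ℝ}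
variable [IsProbabilityMeasure P]

lemma ae_A_good (W : MERWStops P d p q r) (n : ℕ) (hn : 1 ≤ n) :
    ∀ᵐ ω ∂P, W.A (n+1) ω = 0 ∨ NormPres (W.A (n+1) ω) := by
  have hd0 : 0 < d := W.hd
  set E : Matrix (Fin d) (Fin d) ℝ → Set Ω := fun M => {ω | W.A (n+1) ω = M} with hE
  have hmeas : ∀ M, MeasurableSet (E M) := fun M => W.measA (n+1) (measurableSet_singleton M)
  have hdisj : ∀ M N, M ≠ N → Disjoint (E M) (E N) := fun M N h =>
    Set.disjoint_left.mpr fun ω h1 h2 => h (h1.symm.trans h2)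
  set UP : Set Ω := ⋃ i ∈ Finset.Icc 1 (d-1), E (cyclicMatrix d ^ i) with hUP
  set UN : Set Ω := ⋃ i ∈ Finset.Icc 1 (d-1), E (-(cyclicMatrix d ^ i)) with hUN
  have hUPmeas : MeasurableSet UP := Finset.measurableSet_biUnion _ fun i _ => hmeas _
  have hUNmeas : MeasurableSet UN := Finset.measurableSet_biUnion _ fun i _ => hmeas _
  have hPUP : P UP = ((d-1 : ℕ) : ℝ≥0∞) * ENNReal.ofReal q := by
    have hUPdisj : (↑(Finset.Icc 1 (d-1)) : Set ℕ).PairwiseDisjoint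
        (fun i => E (cyclicMatrix d ^ i)) := by
      intro i hi j hj hij
      simp only [Finset.coe_Icc, Set.mem_Icc] at hi hj
      exact hdisj _ _ (cyc_ne_cyc hd0 (by omega) (by omega) hij)
    rw [hUP, measure_biUnion_finset hUPdisj (fun i _ => hmeas _),
      Finset.sum_congr rfl (fun i hi => W.hAJ n hn i hi),
      Finset.sum_const, Nat.card_Icc, nsmul_eq_mul]
    simp
  have hPUN : P UN = ((d-1 : ℕ) : ℝ≥0∞) * ENNReal.ofReal q := by
    have hUNdisj : (↑(Finset.Icc 1 (d-1)) : Set ℕ).PairwiseDisjoint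
        (fun i => E (-(cyclicMatrix d ^ i))) := by
      intro i hi j hj hij
      simp only [Finset.coe_Icc, Set.mem_Icc] at hi hj
      exact hdisj _ _ (fun h => cyc_ne_cyc hd0 (by omega) (by omega) hij (neg_injective h))
    rw [hUN, measure_biUnion_finset hUNdisj (fun i _ => hmeas _),
      Finset.sum_congr rfl (fun i hi => W.hAnegJ n hn i hi),
      Finset.sum_const, Nat.card_Icc, nsmul_eq_mul]
    simp
  have memUP : ∀ ω, ω ∈ UP → ∃ i, 1 ≤ i ∧ i < d ∧ W.A (n+1) ω = cyclicMatrix d ^ i := by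
    intro ω hω
    rw [hUP] at hω
    simp only [Set.mem_iUnion, Finset.mem_Icc] at hω
    obtain ⟨i, hi, hω⟩ := hω
    exact ⟨i, hi.1, by omega, hω⟩
  have memUN : ∀ ω, ω ∈ UN → ∃ i, 1 ≤ i ∧ i < d ∧ W.A (n+1) ω = -(cyclicMatrix d ^ i) := by
    intro ω hω
    rw [hUN] at hω
    simp only [Set.mem_iUnion, Finset.mem_Icc] at hω
    obtain ⟨i, hi, hω⟩ := hω
    exact ⟨i, hi.1, by omega, hω⟩
  have disjUP : ∀ N, (∀ i, 1 ≤ i → i < d → N ≠ cyclicMatrix d ^ i) → Disjoint (E N) UP := by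
    intro N hN
    refine Set.disjoint_left.mpr fun ω hω1 hω2 => ?_
    obtain ⟨i, h1, h2, hω2'⟩ := memUP ω hω2
    exact hN i h1 h2 ((hω1 : W.A (n+1) ω = N).symm.trans hω2')
  have disjUN : ∀ N, (∀ i, 1 ≤ i → i < d → N ≠ -(cyclicMatrix d ^ i)) → Disjoint (E N) UN := by
    intro N hN
    refine Set.disjoint_left.mpr fun ω hω1 hω2 => ?_
    obtain ⟨i, h1, h2, hω2'⟩ := memUN ω hω2
    exact hN i h1 h2 ((hω1 : W.A (n+1) ω = N).symm.trans hω2')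
  have disjUPUN : Disjoint UP UN := by
    refine Set.disjoint_left.mpr fun ω hω1 hω2 => ?_
    obtain ⟨i, h1, h2, he1⟩ := memUP ω hω1
    obtain ⟨j, h3, h4, he2⟩ := memUN ω hω2
    exact cyc_ne_negcyc hd0 h2 h4 (he1.symm.trans he2)
  have dis1 : Disjoint (E 1) (E (-1)) := hdisj _ _ (matrix_one_ne_negone hd0)
  have dis2 : Disjoint (E 1 ∪ E (-1)) (E 0) := by
    rw [Set.disjoint_union_left]
    exact ⟨hdisj _ _ (matrix_one_ne_zero hd0), hdisj _ _ (matrix_negone_ne_zero hd0)⟩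
  have dis3 : Disjoint (E 1 ∪ E (-1) ∪ E 0) UP := by
    rw [Set.disjoint_union_left, Set.disjoint_union_left]
    exact ⟨⟨disjUP 1 (fun i h1 h2 h => cyc_ne_one hd0 h2 h1 h.symm),
      disjUP (-1) (fun i h1 h2 h => cyc_ne_negone hd0 h2 h1 h.symm)⟩,
      disjUP 0 (fun i h1 h2 h => cyc_ne_zero hd0 h2 h1 h.symm)⟩
  have dis4 : Disjoint (E 1 ∪ E (-1) ∪ E 0 ∪ UP) UN := by
    rw [Set.disjoint_union_left, Set.disjoint_union_left, Set.disjoint_union_left]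
    refine ⟨⟨⟨disjUN 1 (fun i h1 h2 h => ?_), disjUN (-1) (fun i h1 h2 h => ?_)⟩,
      disjUN 0 (fun i h1 h2 h => ?_)⟩, disjUPUN⟩
    · exact cyc_ne_negone hd0 h2 h1 (neg_eq_iff_eq_neg.mp h.symm)
    · exact cyc_ne_one hd0 h2 h1 (neg_injective h).symm
    · exact cyc_ne_zero hd0 h2 h1 (neg_eq_zero.mp h.symm)
  have hq0 : 0 ≤ q := W.hq.1
  have hr0 : 0 ≤ r := W.hr.1
  have hp0 : 0 ≤ p := W.hp.1
  have hdq : 0 ≤ ((d-1:ℕ):ℝ) * q := mul_nonneg (Nat.cast_nonneg _) hq0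
  have hPU : P (E 1 ∪ E (-1) ∪ E 0 ∪ UP ∪ UN) = 1 := by
    rw [measure_union dis4 hUNmeas, measure_union dis3 hUPmeas,
      measure_union dis2 (hmeas 0), measure_union dis1 (hmeas (-1))]
    have h1 : P (E 1) = ENNReal.ofReal p := W.hAI n hn
    have h2 : P (E (-1)) = ENNReal.ofReal q := W.hAnegI n hn
    have h3 : P (E 0) = ENNReal.ofReal r := W.hAzero n hn
    rw [h1, h2, h3, hPUP, hPUN]
    have e1 : ((d-1:ℕ):ℝ≥0∞) * ENNReal.ofReal q = ENNReal.ofReal (((d-1:ℕ):ℝ) * q) := by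
      rw [← ENNReal.ofReal_natCast, ← ENNReal.ofReal_mul (Nat.cast_nonneg _)]
    rw [e1, ← ENNReal.ofReal_add hp0 hq0, ← ENNReal.ofReal_add (by linarith) hr0,
      ← ENNReal.ofReal_add (by linarith) hdq, ← ENNReal.ofReal_add (by linarith) hdq]
    rw [show p + q + r + ((d-1:ℕ):ℝ) * q + ((d-1:ℕ):ℝ) * q = 1 from ?_, ENNReal.ofReal_one]
    have hcast : ((d-1:ℕ):ℝ) = (d:ℝ) - 1 := by
      rw [Nat.cast_sub W.hd, Nat.cast_one]
    rw [hcast]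
    linear_combination W.hpqr
  have hc0 : P ((E 1 ∪ E (-1) ∪ E 0 ∪ UP ∪ UN)ᶜ) = 0 := by
    rw [measure_compl (((((hmeas 1).union (hmeas (-1))).union (hmeas 0)).union
      hUPmeas).union hUNmeas) (measure_ne_top _ _), hPU]
    simp
  have hae : ∀ᵐ ω ∂P, ω ∈ E 1 ∪ E (-1) ∪ E 0 ∪ UP ∪ UN := by
    filter_upwards [(measure_eq_zero_iff_ae_notMem (μ := P)).mp hc0] with ω hω
    exact Set.not_notMem.mp hω
  filter_upwards [hae] with ω hω
  rcases hω with ((((h|h)|h)|h)|h)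
  · right; rw [(h : W.A (n+1) ω = 1)]; exact normPres_one
  · right; rw [(h : W.A (n+1) ω = -1)]; exact normPres_neg normPres_one
  · left; exact h
  · obtain ⟨i, _, _, he⟩ := memUP ω h; right; rw [he]; exact normPres_cyc hd0 i
  · obtain ⟨i, _, _, he⟩ := memUN ω h; right; rw [he]; exact normPres_neg (normPres_cyc hd0 i)

end MERWStops
namespace MERWStops

open Finset MeasureTheory ProbabilityTheory
open scoped ENNReal

variable {Ω : Type*} [MeasurableSpace Ω] {P : Measure Ω} {d : ℕ} {p q r : ℝ}
variable [IsProbabilityMeasure P]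

lemma norm_succ_sq (W : MERWStops P d p q r) (n : ℕ) (hn : 1 ≤ n) (ω : Ω) :
    ‖W.X (n+1) ω‖ ^ 2
      = ∑ a : Fin d, (∑ b : Fin d, W.A (n+1) ω a b * W.X (W.β n ω) ω b) ^ 2 := by
  rw [euclidean_norm_sq_eq]
  exact Finset.sum_congr rfl fun a _ => by rw [W.hrec n hn ω a]

lemma ae_norms (W : MERWStops P d p q r) (n : ℕ) (hn : 1 ≤ n) :
    ∀ᵐ ω ∂P, ∀ k, 1 ≤ k → k ≤ n → (‖W.X k ω‖ = 1 ∨ ‖W.X k ω‖ = 0) := by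
  induction n, hn using Nat.le_induction with
  | base =>
    filter_upwards [ae_norm_one W] with ω h
    intro k h1 h2
    have : k = 1 := by omega
    rw [this]
    exact Or.inl h
  | succ n hn ih =>
    filter_upwards [ih, ae_A_good W n hn, ae_beta_mem W n hn] with ω hI hA hβm
    intro k hk1 hk2
    by_cases hkn : k ≤ n
    · exact hI k hk1 hkn
    · have hk : k = n + 1 := by omega
      subst hk
      have hsq := norm_succ_sq W n hn ω
      rcases hA with h0 | hNP
      · right
        have h2 : ‖W.X (n+1) ω‖ ^ 2 = 0 := by
          rw [hsq, h0]
          simp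
        exact pow_eq_zero_iff two_ne_zero |>.mp h2
      · have hb := Finset.mem_Icc.mp hβm
        have h5 : ‖W.X (n+1) ω‖ ^ 2 = ‖W.X (W.β n ω) ω‖ ^ 2 := by
          rw [hsq, hNP, ← euclidean_norm_sq_eq]
        have hs : ‖W.X (n+1) ω‖ = Real.sqrt (‖W.X (W.β n ω) ω‖ ^ 2) := by
          rw [← h5, Real.sqrt_sq (norm_nonneg _)]
        rcases hI (W.β n ω) hb.1 hb.2 with h | h
        · left; rw [hs, h]; norm_num
        · right; rw [hs, h]; norm_num

lemma prob_rec (W : MERWStops P d p q r) (n : ℕ) (hn : 1 ≤ n) :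
    P {ω | ‖W.X (n+1) ω‖ = 1} ≤
      ENNReal.ofReal ((1-r)/(n:ℝ)) * ∑ k ∈ Finset.Icc 1 n, P {ω | ‖W.X k ω‖ = 1} := by
  have hr0 : 0 ≤ r := W.hr.1
  have hr1 : r ≤ 1 := W.hr.2
  set D : Set Ω := {ω | W.A (n+1) ω ≠ 0} with hD
  have hsub : {ω | ‖W.X (n+1) ω‖ = 1} ≤ᵐ[P]
      ⋃ k ∈ Finset.Icc 1 n,
        (D ∩ ({ω | W.β n ω = k} ∩ {ω | ‖W.X k ω‖ = 1})) := by
    filter_upwards [ae_A_good W n hn, ae_beta_mem W n hn] with ω hA hβm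
    intro hE
    have hE' : ‖W.X (n+1) ω‖ = 1 := hE
    have hsq := norm_succ_sq W n hn ω
    rcases hA with h0 | hNP
    · exfalso
      have h2 : ‖W.X (n+1) ω‖ ^ 2 = 0 := by rw [hsq, h0]; simp
      rw [hE'] at h2; norm_num at h2
    · have h5 : ‖W.X (n+1) ω‖ ^ 2 = ‖W.X (W.β n ω) ω‖ ^ 2 := by
        rw [hsq, hNP, ← euclidean_norm_sq_eq]
      have hnormβ : ‖W.X (W.β n ω) ω‖ = 1 := by
        have h6 : ‖W.X (W.β n ω) ω‖ ^ 2 = 1 := by rw [← h5, hE']; norm_num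
        have := Real.sqrt_sq (norm_nonneg (W.X (W.β n ω) ω))
        rw [← this, h6, Real.sqrt_one]
      have hAne : W.A (n+1) ω ≠ 0 := by
        intro h0
        have h2 : ‖W.X (n+1) ω‖ ^ 2 = 0 := by rw [hsq, h0]; simp
        rw [hE'] at h2; norm_num at h2
      exact Set.mem_biUnion hβm ⟨hAne, rfl, hnormβ⟩
  have hmeasD : MeasurableSet {ω | W.A (n+1) ω = 0} :=
    W.measA (n+1) (measurableSet_singleton 0)
  have hPD : P D = 1 - ENNReal.ofReal r := by
    have hDc : D = {ω | W.A (n+1) ω = 0}ᶜ := rfl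
    rw [hDc, measure_compl hmeasD (measure_ne_top _ _), W.hAzero n hn, measure_univ]
  have hindep3 : ∀ k ∈ Finset.Icc 1 n,
      P (D ∩ ({ω | W.β n ω = k} ∩ {ω | ‖W.X k ω‖ = 1}))
        = P D * (P {ω | W.β n ω = k} * P {ω | ‖W.X k ω‖ = 1}) := by
    intro k hk
    have h3 := (W.hindep n hn).meas_iInter
      (s := ![D, {ω | W.β n ω = k}, {ω | ‖W.X k ω‖ = 1}]) ?_
    · have hset : (⋂ i, (![D, {ω | W.β n ω = k}, {ω | ‖W.X k ω‖ = 1}]) i)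
          = D ∩ ({ω | W.β n ω = k} ∩ {ω | ‖W.X k ω‖ = 1}) := by
        ext ω
        simp [Set.mem_iInter, Fin.forall_fin_succ]
      rw [hset] at h3
      rw [h3, Fin.prod_univ_three]
      simp only [Matrix.cons_val_zero, Matrix.cons_val_one, Matrix.head_cons,
        Matrix.cons_val_two, Matrix.tail_cons]
      ring
    · intro i
      match i with
      | 0 =>
        refine ⟨{(0 : Matrix (Fin d) (Fin d) ℝ)}ᶜ, (measurableSet_singleton _).compl, rfl⟩
      | 1 =>
        exact ⟨{k}, measurableSet_singleton _, rfl⟩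
      | 2 =>
        have h1 : MeasurableSet[MeasurableSpace.comap (W.X k) inferInstance]
            {ω | ‖W.X k ω‖ = 1} :=
          ⟨{x | ‖x‖ = 1}, measurable_norm (measurableSet_singleton 1), rfl⟩
        have hle : (MeasurableSpace.comap (W.X k) inferInstance : MeasurableSpace Ω)
            ≤ ⨆ j ∈ Finset.Icc 1 n, MeasurableSpace.comap (W.X j) inferInstance :=
          le_iSup₂ (f := fun j (_ : j ∈ Finset.Icc 1 n) =>
            MeasurableSpace.comap (W.X j) inferInstance) k hk
        exact hle _ h1
  calc P {ω | ‖W.X (n+1) ω‖ = 1}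
      ≤ P (⋃ k ∈ Finset.Icc 1 n,
          (D ∩ ({ω | W.β n ω = k} ∩ {ω | ‖W.X k ω‖ = 1}))) := measure_mono_ae hsub
    _ ≤ ∑ k ∈ Finset.Icc 1 n,
          P (D ∩ ({ω | W.β n ω = k} ∩ {ω | ‖W.X k ω‖ = 1})) := measure_biUnion_finset_le _ _
    _ = ∑ k ∈ Finset.Icc 1 n,
          (P D * (ENNReal.ofReal (1/(n:ℝ)) * P {ω | ‖W.X k ω‖ = 1})) := by
        refine Finset.sum_congr rfl fun k hk => ?_
        rw [hindep3 k hk, W.hβ n hn k hk]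
    _ = P D * (ENNReal.ofReal (1/(n:ℝ)) * ∑ k ∈ Finset.Icc 1 n, P {ω | ‖W.X k ω‖ = 1}) := by
        rw [← Finset.mul_sum, ← Finset.mul_sum]
    _ = ENNReal.ofReal ((1-r)/(n:ℝ)) * ∑ k ∈ Finset.Icc 1 n, P {ω | ‖W.X k ω‖ = 1} := by
        rw [hPD]
        rw [show (1 : ℝ≥0∞) - ENNReal.ofReal r = ENNReal.ofReal (1 - r) by
          rw [ENNReal.ofReal_sub 1 hr0, ENNReal.ofReal_one]]
        rw [← mul_assoc, ← ENNReal.ofReal_mul (by linarith), mul_one_div]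

end MERWStops
lemma aseq_succ (r : ℝ) (n : ℕ) (hn : 1 ≤ n) :
    MERWStops.aseq r (n+1) = MERWStops.aseq r n * (1 + (1-r)/(n:ℝ)) := by
  cases n with
  | zero => omega
  | succ m =>
    show (∏ k ∈ Finset.Icc 1 (m+1+1-1), (1 + (1 - r) / (k : ℝ)))
      = (∏ k ∈ Finset.Icc 1 (m+1-1), (1 + (1 - r) / (k : ℝ))) * _
    simp only [Nat.add_sub_cancel]
    rw [Finset.prod_Icc_succ_top (by omega : 1 ≤ m + 1)]

lemma aseq_nonneg {r : ℝ} (hr1 : r ≤ 1) (n : ℕ) : 0 ≤ MERWStops.aseq r n := by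
  refine Finset.prod_nonneg fun k hk => ?_
  have : (0:ℝ) ≤ (1-r)/(k:ℝ) := div_nonneg (by linarith) (Nat.cast_nonneg k)
  linarith

lemma sum_inv_le_one_add_log (m : ℕ) :
    ∑ k ∈ Finset.Icc 1 m, 1/(k:ℝ) ≤ 1 + Real.log m := by
  have h := harmonic_le_one_add_log m
  rw [harmonic_eq_sum_Icc] at h
  push_cast at h
  simpa [one_div] using h

lemma aseq_le_rpow {r : ℝ} (hr0 : 0 ≤ r) (hr1 : r ≤ 1) (n : ℕ) (hn : 1 ≤ n) :
    MERWStops.aseq r n ≤ Real.exp 1 * (n:ℝ) ^ (1-r) := by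
  have hs0 : (0:ℝ) ≤ 1 - r := by linarith
  have h1 : MERWStops.aseq r n ≤ Real.exp ((1-r) * ∑ k ∈ Finset.Icc 1 (n-1), 1/(k:ℝ)) := by
    rw [Finset.mul_sum, Real.exp_sum]
    refine Finset.prod_le_prod (fun k hk => ?_) (fun k hk => ?_)
    · have : (0:ℝ) ≤ (1-r)/(k:ℝ) := div_nonneg hs0 (Nat.cast_nonneg k)
      linarith
    · have := Real.add_one_le_exp ((1-r) * (1/(k:ℝ)))
      rw [mul_one_div] at this ⊢
      linarith
  have h2 : ∑ k ∈ Finset.Icc 1 (n-1), 1/(k:ℝ) ≤ 1 + Real.log ((n-1:ℕ):ℝ) :=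
    sum_inv_le_one_add_log (n-1)
  have h3 : Real.log ((n-1:ℕ):ℝ) ≤ Real.log (n:ℝ) := by
    rcases Nat.lt_or_ge n 2 with h | h
    · have hn1 : n = 1 := by omega
      subst hn1
      simp
    · refine Real.log_le_log ?_ ?_
      · have h1n : 1 ≤ n - 1 := by omega
        have : (1:ℝ) ≤ ((n-1:ℕ):ℝ) := by exact_mod_cast h1n
        linarith
      · exact_mod_cast Nat.sub_le n 1
  have hn0 : (0:ℝ) < (n:ℝ) := by exact_mod_cast hn
  calc MERWStops.aseq r n
      ≤ Real.exp ((1-r) * ∑ k ∈ Finset.Icc 1 (n-1), 1/(k:ℝ)) := h1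
    _ ≤ Real.exp ((1-r) * (1 + Real.log (n:ℝ))) :=
        Real.exp_le_exp.mpr (mul_le_mul_of_nonneg_left (by linarith) hs0)
    _ = Real.exp (1-r) * Real.exp ((1-r) * Real.log (n:ℝ)) := by
        rw [mul_add, mul_one, Real.exp_add]
    _ ≤ Real.exp 1 * (n:ℝ) ^ (1-r) := by
        have e2 : Real.exp ((1-r) * Real.log (n:ℝ)) = (n:ℝ) ^ (1-r) := by
          rw [Real.rpow_def_of_pos hn0, mul_comm]
        rw [e2]
        exact mul_le_mul_of_nonneg_right (Real.exp_le_exp.mpr (by linarith))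
          (Real.rpow_nonneg hn0.le _)

namespace MERWStops

open Finset MeasureTheory ProbabilityTheory
open scoped ENNReal

variable {Ω : Type*} [MeasurableSpace Ω] {P : Measure Ω} {d : ℕ} {p q r : ℝ}
variable [IsProbabilityMeasure P]

lemma V_le (W : MERWStops P d p q r) (n : ℕ) (hn : 1 ≤ n) :
    ∑ k ∈ Finset.Icc 1 n, P {ω | ‖W.X k ω‖ = 1} ≤ ENNReal.ofReal (aseq r n) := by
  have hr1 : r ≤ 1 := W.hr.2
  induction n, hn using Nat.le_induction with
  | base =>
    rw [show Finset.Icc 1 1 = {1} from rfl, Finset.sum_singleton]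
    rw [show aseq r 1 = 1 by simp [aseq], ENNReal.ofReal_one]
    exact prob_le_one
  | succ n hn ih =>
    rw [Finset.sum_Icc_succ_top (by omega : 1 ≤ n+1)]
    have h1 := prob_rec W n hn
    calc (∑ k ∈ Finset.Icc 1 n, P {ω | ‖W.X k ω‖ = 1}) + P {ω | ‖W.X (n+1) ω‖ = 1}
        ≤ (∑ k ∈ Finset.Icc 1 n, P {ω | ‖W.X k ω‖ = 1})
            + ENNReal.ofReal ((1-r)/(n:ℝ)) * ∑ k ∈ Finset.Icc 1 n, P {ω | ‖W.X k ω‖ = 1} :=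
          add_le_add_right h1 _
      _ = (∑ k ∈ Finset.Icc 1 n, P {ω | ‖W.X k ω‖ = 1})
            * (1 + ENNReal.ofReal ((1-r)/(n:ℝ))) := by ring
      _ ≤ ENNReal.ofReal (aseq r n) * (1 + ENNReal.ofReal ((1-r)/(n:ℝ))) :=
          mul_le_mul_left ih _
      _ = ENNReal.ofReal (aseq r (n+1)) := by
          rw [aseq_succ r n hn, ENNReal.ofReal_mul (aseq_nonneg hr1 n),
            ENNReal.ofReal_add one_pos.le
              (div_nonneg (by linarith) (Nat.cast_nonneg n)), ENNReal.ofReal_one]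

lemma lint_Zstar (W : MERWStops P d p q r) (n : ℕ) (hn : 1 ≤ n) :
    ∫⁻ ω, ENNReal.ofReal (W.Zstar n ω) ∂P ≤ ENNReal.ofReal (aseq r n) := by
  have hmn : ∀ k : ℕ, Measurable fun ω => ENNReal.ofReal (‖W.X k ω‖^2) := fun k =>
    (((W.measX k).norm).pow_const 2).ennreal_ofReal
  have h1 : ∫⁻ ω, ENNReal.ofReal (W.Zstar n ω) ∂P
      = ∑ k ∈ Finset.Icc 1 n, ∫⁻ ω, ENNReal.ofReal (‖W.X k ω‖^2) ∂P := by
    rw [← lintegral_finset_sum _ (fun k _ => hmn k)]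
    refine lintegral_congr fun ω => ?_
    exact ENNReal.ofReal_sum_of_nonneg (fun k _ => by positivity)
  have h2 : ∀ k, 1 ≤ k → k ≤ n →
      ∫⁻ ω, ENNReal.ofReal (‖W.X k ω‖^2) ∂P = P {ω | ‖W.X k ω‖ = 1} := by
    intro k h1k h2k
    have hae : (fun ω => ENNReal.ofReal (‖W.X k ω‖^2))
        =ᵐ[P] {ω | ‖W.X k ω‖ = 1}.indicator (fun _ => (1:ℝ≥0∞)) := by
      filter_upwards [ae_norms W n hn] with ω hω
      rcases hω k h1k h2k with h | h
      · have hmem : ω ∈ {ω | ‖W.X k ω‖ = 1} := h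
        rw [Set.indicator_of_mem hmem, h]
        norm_num
      · have hnot : ω ∉ {ω | ‖W.X k ω‖ = 1} := by
          intro hc
          rw [Set.mem_setOf_eq] at hc
          rw [h] at hc
          norm_num at hc
        rw [Set.indicator_of_notMem hnot, h]
        norm_num
    rw [lintegral_congr_ae hae, lintegral_indicator (measE W k)]
    simp
  rw [h1, Finset.sum_congr rfl
    (fun k hk => h2 k (Finset.mem_Icc.mp hk).1 (Finset.mem_Icc.mp hk).2)]
  exact V_le W n hn

end MERWStops
/-- In the MERW with stops, if `1/2 < r ≤ 1`, then
`limsup Z_n*/√(2 n log log n) ≤ 1/√(2r-1)` a.s. -/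
theorem merwStops_lil_of_half_lt_r
    {Ω : Type*} [MeasurableSpace Ω] {P : Measure Ω} [IsProbabilityMeasure P]
    {d : ℕ} {p q r : ℝ} (W : MERWStops P d p q r) (hr : 1 / 2 < r) :
    ∀ᵐ ω ∂P,
      limsup (fun n : ℕ =>
          W.Zstar n ω / Real.sqrt (2 * n * Real.log (Real.log n))) atTop
        ≤ 1 / Real.sqrt (2 * r - 1) := by
  have hr0 : 0 ≤ r := W.hr.1
  have hr1 : r ≤ 1 := W.hr.2
  set c : ℕ → ℝ := fun j => Real.sqrt ((2:ℝ)^j) with hc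
  set B : ℕ → Set Ω := fun j => {ω | c j ≤ W.Zstar (2^j) ω} with hB
  have hZmeas : ∀ n : ℕ, Measurable (fun ω => W.Zstar n ω) := fun n =>
    Finset.measurable_sum _ (fun k _ => ((W.measX k).norm.pow_const 2))
  have hmarkov : ∀ j : ℕ,
      P (B j) ≤ ENNReal.ofReal (Real.exp 1 * (((2:ℕ)^j : ℕ):ℝ)^(1-r) / c j) := by
    intro j
    have h2j : 1 ≤ 2^j := Nat.one_le_two_pow
    have hcpos : 0 < c j := Real.sqrt_pos.mpr (by positivity)
    have h1 : ENNReal.ofReal (c j) * P (B j)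
        ≤ ∫⁻ ω, ENNReal.ofReal (W.Zstar (2^j) ω) ∂P := by
      refine le_trans (mul_le_mul_right ?_ _)
        (mul_meas_ge_le_lintegral₀ (μ := P)
          ((hZmeas (2^j)).ennreal_ofReal.aemeasurable) (ENNReal.ofReal (c j)))
      refine measure_mono fun ω hω => ?_
      exact ENNReal.ofReal_le_ofReal hω
    have h4 : ENNReal.ofReal (c j) * P (B j)
        ≤ ENNReal.ofReal (Real.exp 1 * (((2:ℕ)^j : ℕ):ℝ)^(1-r)) :=
      le_trans h1 (le_trans (W.lint_Zstar _ h2j)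
        (ENNReal.ofReal_le_ofReal (aseq_le_rpow hr0 hr1 _ h2j)))
    rw [ENNReal.ofReal_div_of_pos hcpos]
    rw [ENNReal.le_div_iff_mul_le
      (Or.inl (ENNReal.ofReal_pos.mpr hcpos).ne') (Or.inl ENNReal.ofReal_ne_top)]
    rw [mul_comm]
    exact h4
  set ρ : ℝ := (2:ℝ) ^ ((1:ℝ)/2 - r) with hρ
  have hρ0 : 0 ≤ ρ := Real.rpow_nonneg (by norm_num) _
  have hρ1 : ρ < 1 := Real.rpow_lt_one_of_one_lt_of_neg (by norm_num) (by linarith)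
  have hterm : ∀ j : ℕ,
      Real.exp 1 * (((2:ℕ)^j : ℕ):ℝ)^(1-r) / c j = Real.exp 1 * ρ^j := by
    intro j
    have h2 : (((2:ℕ)^j : ℕ):ℝ) = (2:ℝ)^j := by push_cast; ring
    have e1 : ((2:ℝ)^j) ^ (1-r) = (2:ℝ) ^ ((j:ℝ) * (1-r)) := by
      rw [← Real.rpow_natCast 2 j, ← Real.rpow_mul (by norm_num)]
    have e2 : c j = (2:ℝ) ^ ((j:ℝ) * ((1:ℝ)/2)) := by
      show Real.sqrt ((2:ℝ)^j) = _
      rw [Real.sqrt_eq_rpow, ← Real.rpow_natCast 2 j, ← Real.rpow_mul (by norm_num)]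
    have e3 : ρ ^ j = (2:ℝ) ^ ((j:ℝ) * ((1:ℝ)/2 - r)) := by
      rw [← Real.rpow_natCast ρ j, hρ, ← Real.rpow_mul (by norm_num), mul_comm]
    rw [h2, e1, e2, e3, mul_div_assoc, ← Real.rpow_sub (by norm_num : (0:ℝ) < 2)]
    congr 2
    ring
  have hsummable : Summable (fun j : ℕ => Real.exp 1 * ρ^j) :=
    (summable_geometric_of_lt_one hρ0 hρ1).mul_left _
  have htsum : (∑' j, P (B j)) ≠ ⊤ := by
    refine ne_top_of_le_ne_top ?_
      (ENNReal.tsum_le_tsum (fun j => (hmarkov j).trans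
        (le_of_eq (congrArg ENNReal.ofReal (hterm j)))))
    rw [← ENNReal.ofReal_tsum_of_nonneg (fun j => by positivity) hsummable]
    exact ENNReal.ofReal_ne_top
  filter_upwards [ae_eventually_notMem (μ := P) (s := B) htsum] with ω hω
  have hZnn : ∀ n : ℕ, 0 ≤ W.Zstar n ω := fun n =>
    Finset.sum_nonneg fun k _ => by positivity
  have hZmono : ∀ {a b : ℕ}, a ≤ b → W.Zstar a ω ≤ W.Zstar b ω := by
    intro a b hab
    exact Finset.sum_le_sum_of_subset_of_nonneg
      (Finset.Icc_subset_Icc_right hab) (fun k _ _ => by positivity)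
  obtain ⟨J, hJ⟩ := (eventually_atTop).mp hω
  have hbound : ∀ᶠ n : ℕ in atTop,
      W.Zstar n ω / Real.sqrt (2*n*Real.log (Real.log n))
        ≤ 1 / Real.sqrt (Real.log (Real.log n)) := by
    rw [eventually_atTop]
    refine ⟨max (2^J) 16, fun n hn => ?_⟩
    have hn16 : 16 ≤ n := le_trans (le_max_right _ _) hn
    have hn2J : 2^J ≤ n := le_trans (le_max_left _ _) hn
    have hn0 : 0 < n := by omega
    set j := Nat.log 2 n with hj
    have hjJ : J ≤ j := (Nat.le_log_iff_pow_le (by norm_num) (by omega)).mpr hn2J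
    have hnj : n < 2^(j+1) := Nat.lt_pow_succ_log_self (by norm_num) n
    have hZb : W.Zstar n ω < c (j+1) := by
      have h5 := hJ (j+1) (by omega)
      have h6 : W.Zstar (2^(j+1)) ω < c (j+1) := not_le.mp h5
      exact lt_of_le_of_lt (hZmono (le_of_lt hnj)) h6
    have hc2n : c (j+1) ≤ Real.sqrt (2*(n:ℝ)) := by
      apply Real.sqrt_le_sqrt
      have hjn : 2^j ≤ n := Nat.pow_log_le_self 2 (by omega)
      have hN : (2:ℕ)^(j+1) ≤ 2*n := by
        calc (2:ℕ)^(j+1) = 2*2^j := by ring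
          _ ≤ 2*n := by omega
      exact_mod_cast hN
    have hL : 0 < Real.log (Real.log n) := by
      have h16 : (16:ℝ) ≤ (n:ℝ) := by exact_mod_cast hn16
      have hlog : 1 < Real.log n := by
        have he : Real.exp 1 < (n:ℝ) :=
          lt_of_lt_of_le (lt_trans Real.exp_one_lt_d9 (by norm_num)) h16
        calc (1:ℝ) = Real.log (Real.exp 1) := (Real.log_exp 1).symm
          _ < Real.log n := Real.log_lt_log (Real.exp_pos 1) he
      exact Real.log_pos hlog
    have hZ2n : W.Zstar n ω ≤ Real.sqrt (2*(n:ℝ)) := le_of_lt (lt_of_lt_of_le hZb hc2n)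
    have hsplit : Real.sqrt (2*(n:ℝ)*Real.log (Real.log n))
        = Real.sqrt (2*(n:ℝ)) * Real.sqrt (Real.log (Real.log n)) :=
      Real.sqrt_mul (by positivity) _
    rw [hsplit]
    have h2n0 : 0 < Real.sqrt (2*(n:ℝ)) := Real.sqrt_pos.mpr (by positivity)
    have hL0 : 0 < Real.sqrt (Real.log (Real.log (n:ℝ))) := Real.sqrt_pos.mpr hL
    rw [div_le_div_iff₀ (by positivity) hL0]
    calc W.Zstar n ω * Real.sqrt (Real.log (Real.log (n:ℝ)))
        ≤ Real.sqrt (2*(n:ℝ)) * Real.sqrt (Real.log (Real.log (n:ℝ))) :=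
          mul_le_mul_of_nonneg_right hZ2n hL0.le
      _ = 1 * (Real.sqrt (2*(n:ℝ)) * Real.sqrt (Real.log (Real.log (n:ℝ)))) := by ring
  have hub : Tendsto (fun n : ℕ => 1 / Real.sqrt (Real.log (Real.log n)))
      atTop (nhds 0) := by
    have hsq : Tendsto Real.sqrt atTop atTop := by
      refine tendsto_atTop_atTop.mpr fun b => ⟨max (b^2) 0, fun a ha => ?_⟩
      rcases le_total b 0 with hb | hb
      · exact le_trans hb (Real.sqrt_nonneg a)
      · have h1 : b^2 ≤ a := le_trans (le_max_left _ _) ha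
        calc b = Real.sqrt (b^2) := (Real.sqrt_sq hb).symm
          _ ≤ Real.sqrt a := Real.sqrt_le_sqrt h1
    have h1 : Tendsto (fun n : ℕ => Real.sqrt (Real.log (Real.log n))) atTop atTop :=
      hsq.comp (Real.tendsto_log_atTop.comp
        (Real.tendsto_log_atTop.comp tendsto_natCast_atTop_atTop))
    simpa [one_div, Pi.inv_def] using h1.inv_tendsto_atTop
  have htend : Tendsto (fun n : ℕ =>
      W.Zstar n ω / Real.sqrt (2*n*Real.log (Real.log n))) atTop (nhds 0) :=
    tendsto_of_tendsto_of_tendsto_of_le_of_le' tendsto_const_nhds hub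
      (Filter.Eventually.of_forall fun n =>
        div_nonneg (hZnn n) (Real.sqrt_nonneg _)) hbound
  rw [htend.limsup_eq]
  positivity
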